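/- For every ε > 0, the set {m ∈ ℤ⁺ : for all natural numbers k with 0 ≤ k ≤ log₂ m, r_k(m) · 3^(k/2) · m^(−ε) < 1} is *-dense. -/

import Mathlib

set_option maxHeartbeats 1000000


/-- The accelerated Collatz map `T(m) = m/2` if `m` even, `(3m+1)/2` if `m` odd. -/
def T (m : ℕ) : ℕ := if m % 2 = 0 then m / 2 else (3 * m + 1) / 2

/-- The parity sequence of `m`: `p(m)_k = T^[k] m mod 2`. -/
def parity (m k : ℕ) : ℕ := T^[k] m % 2

open scoped Classical in
/-- Number of elements of `A` in `{1, …, n}`. -/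
noncomputable def countIn (A : Set ℕ) (n : ℕ) : ℕ :=
  ((Finset.Icc 1 n).filter (fun m => m ∈ A)).card

/-- `S` has `(C,D)`-density: `#(S ∩ [1,N])/N ≥ 1 - C/N^D` for every positive `N`. -/
def hasCDdensity (S : Set ℕ) (C D : ℝ) : Prop :=
  ∀ N : ℕ, 0 < N → 1 - C / (N : ℝ) ^ D ≤ (countIn S N : ℝ) / N

/-- `S` has `D`-density: it has `(C,D)`-density for some `C > 0`. -/
def hasDdensity (S : Set ℕ) (D : ℝ) : Prop := ∃ C > 0, hasCDdensity S C D

/-- `S` is `*`-dense: it has `D`-density for some `0 < D ≤ 1`. -/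
def starDense (S : Set ℕ) : Prop := ∃ D, 0 < D ∧ D ≤ 1 ∧ hasDdensity S D

/-- The remainder term `r_k(m)`. -/
noncomputable def r (k m : ℕ) : ℝ :=
  ∑ i ∈ Finset.range k,
    (parity m i : ℝ) / (3 ^ (∑ j ∈ Finset.range (i + 1), parity m j) * 2 ^ (k - i))

def psum (n m : ℕ) : ℕ := ∑ j ∈ Finset.range n, parity m j

lemma parity_le_one (m i : ℕ) : parity m i ≤ 1 :=
  Nat.lt_succ_iff.mp (Nat.mod_lt _ (by norm_num))

lemma parity_succ (m i : ℕ) : parity m (i+1) = parity (T m) i := by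
  simp [parity, Function.iterate_succ_apply]

lemma parity_zero (m : ℕ) : parity m 0 = m % 2 := rfl

lemma T_mod {n m m' : ℕ} (h : m % 2^(n+1) = m' % 2^(n+1)) : T m % 2^n = T m' % 2^n := by
  have h2 : m % 2 = m' % 2 :=
    Nat.ModEq.of_dvd (dvd_pow_self 2 (Nat.succ_ne_zero n)) (h : m ≡ m' [MOD 2^(n+1)])
  unfold T
  rw [h2]
  by_cases he : m' % 2 = 0
  · simp only [he, if_pos]
    have hm : 2 ∣ m := Nat.dvd_of_mod_eq_zero (h2.trans he)
    have hm' : 2 ∣ m' := Nat.dvd_of_mod_eq_zero he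
    obtain ⟨a, rfl⟩ := hm
    obtain ⟨b, rfl⟩ := hm'
    have h' : 2 * a ≡ 2 * b [MOD 2 * 2^n] := by
      simpa [pow_succ, mul_comm, Nat.ModEq] using (h : _ ≡ _ [MOD 2^(n+1)])
    simpa [Nat.mul_div_cancel_left, Nat.ModEq] using Nat.ModEq.mul_left_cancel' (by norm_num) h'
  · simp only [he, if_neg]
    have hm : m % 2 = 1 := by omega
    have hm' : m' % 2 = 1 := by omega
    have hd : 2 ∣ 3 * m + 1 := by omega
    have hd' : 2 ∣ 3 * m' + 1 := by omega
    obtain ⟨a, ha⟩ := hd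
    obtain ⟨b, hb⟩ := hd'
    have h' : 2 * a ≡ 2 * b [MOD 2 * 2^n] := by
      rw [← ha, ← hb]
      have : (3 * m + 1) ≡ (3 * m' + 1) [MOD 2^(n+1)] :=
        Nat.ModEq.add_right 1 (Nat.ModEq.mul_left 3 h)
      simpa [pow_succ, mul_comm] using this
    have := Nat.ModEq.mul_left_cancel' (a := a) (b := b) (m := 2^n) (by norm_num) h'
    rw [ha, hb, Nat.mul_div_cancel_left _ (by norm_num), Nat.mul_div_cancel_left _ (by norm_num)]
    exact this

lemma parity_congr : ∀ (n : ℕ) {m m' : ℕ}, m % 2^n = m' % 2^n → ∀ i < n, parity m i = parity m' i := by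
  intro n
  induction n with
  | zero => intro m m' h i hi; omega
  | succ n ih =>
    intro m m' h i hi
    match i with
    | 0 =>
      have : m % 2 = m' % 2 :=
        Nat.ModEq.of_dvd (dvd_pow_self 2 (Nat.succ_ne_zero n)) (h : m ≡ m' [MOD 2^(n+1)])
      simpa [parity_zero] using this
    | j + 1 =>
      rw [parity_succ, parity_succ]
      exact ih (T_mod h) j (by omega)

lemma psum_mod (n m : ℕ) : psum n (m % 2^n) = psum n m := by
  unfold psum
  refine Finset.sum_congr rfl fun j hj => ?_
  exact parity_congr n (by simp [Nat.mod_mod_of_dvd]) j (Finset.mem_range.mp hj)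

lemma psum_succ (n m : ℕ) : psum (n+1) m = parity m 0 + psum n (T m) := by
  unfold psum
  rw [Finset.sum_range_succ']
  simp only [parity_succ]
  ring

lemma sum_range_double {M : ℕ} (f : ℕ → ℝ) :
    ∑ ρ ∈ Finset.range (2 * M), f ρ = ∑ j ∈ Finset.range M, (f (2*j) + f (2*j+1)) := by
  induction M with
  | zero => simp
  | succ M ih =>
    rw [Finset.sum_range_succ, ← ih, Nat.mul_succ, Finset.sum_range_succ, Finset.sum_range_succ]
    ring_nf

lemma sum_shift3 {M : ℕ} (hM : 0 < M) (hcop : Nat.Coprime 3 M) (f : ℕ → ℝ) :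
    ∑ j ∈ Finset.range M, f ((3*j+2) % M) = ∑ ρ ∈ Finset.range M, f (ρ % M) := by
  have hinj : Set.InjOn (fun j => (3*j+2) % M) (Finset.range M) := by
    intro i hi j hj hij
    simp only at hij
    have : (3*i+2) ≡ (3*j+2) [MOD M] := by
      unfold Nat.ModEq; omega
    have h3 : 3*i ≡ 3*j [MOD M] := by
      have := Nat.ModEq.add_right_cancel' 2 this
      simpa using this
    have := Nat.ModEq.cancel_left_of_coprime (by simpa [Nat.coprime_comm] using hcop) h3
    simp only [Finset.coe_range, Set.mem_Iio] at hi hj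
    unfold Nat.ModEq at this
    rw [Nat.mod_eq_of_lt hi, Nat.mod_eq_of_lt hj] at this
    exact this
  have himg : Finset.image (fun j => (3*j+2) % M) (Finset.range M) = Finset.range M := by
    apply Finset.eq_of_subset_of_card_le
    · intro x hx
      simp only [Finset.mem_image] at hx
      obtain ⟨j, _, rfl⟩ := hx
      exact Finset.mem_range.mpr (Nat.mod_lt _ hM)
    · rw [Finset.card_image_of_injOn hinj]
  calc ∑ j ∈ Finset.range M, f ((3*j+2) % M)
      = ∑ x ∈ Finset.image (fun j => (3*j+2) % M) (Finset.range M), f x := by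
        rw [Finset.sum_image (fun a ha b hb => hinj ha hb)]
    _ = ∑ ρ ∈ Finset.range M, f ρ := by rw [himg]
    _ = ∑ ρ ∈ Finset.range M, f (ρ % M) := by
        refine Finset.sum_congr rfl fun ρ hρ => ?_
        rw [Nat.mod_eq_of_lt (Finset.mem_range.mp hρ)]

lemma sum_pow_psum (x : ℝ) (hx : 0 ≤ x) : ∀ n : ℕ,
    ∑ ρ ∈ Finset.range (2^n), x ^ psum n ρ = (1+x)^n := by
  intro n
  induction n with
  | zero => simp [psum]
  | succ n ih =>
    have h2 : (2:ℕ)^(n+1) = 2 * 2^n := by ring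
    rw [h2, sum_range_double (fun ρ => x ^ psum (n+1) ρ)]
    have heven : ∀ j, psum (n+1) (2*j) = psum n j := by
      intro j
      rw [psum_succ]
      have hT : T (2*j) = j := by unfold T; simp [Nat.mul_div_cancel_left]
      have hp : parity (2*j) 0 = 0 := by simp [parity_zero, Nat.mul_mod_right]
      rw [hT, hp]; ring
    have hodd : ∀ j, psum (n+1) (2*j+1) = 1 + psum n (3*j+2) := by
      intro j
      rw [psum_succ]
      have hT : T (2*j+1) = 3*j+2 := by
        unfold T
        have : (2*j+1) % 2 = 1 := by omega
        rw [this]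
        norm_num
        omega
      have hp : parity (2*j+1) 0 = 1 := by simp [parity_zero]
      rw [hT, hp]
    simp only [heven, hodd]
    rw [Finset.sum_add_distrib]
    have : ∑ j ∈ Finset.range (2^n), x ^ (1 + psum n (3*j+2))
        = x * ∑ j ∈ Finset.range (2^n), x ^ (psum n (3*j+2)) := by
      rw [Finset.mul_sum]
      refine Finset.sum_congr rfl fun j _ => ?_
      rw [pow_add, pow_one]
    rw [this]
    have hsh := sum_shift3 (M := 2^n) (Nat.two_pow_pos n)
      (Nat.Coprime.pow_right _ (by norm_num)) (fun ρ => x ^ psum n (ρ % 2^n))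
    simp only [Nat.mod_mod_of_dvd _ dvd_rfl] at hsh
    have hrw : ∀ j : ℕ, x ^ psum n (3*j+2) = x ^ psum n ((3*j+2) % 2^n) := by
      intro j; rw [psum_mod]
    rw [Finset.sum_congr rfl (fun j _ => hrw j), hsh]
    have hrw2 : ∀ ρ ∈ Finset.range (2^n), x ^ psum n (ρ % 2^n) = x ^ psum n ρ := by
      intro ρ hρ; rw [Nat.mod_eq_of_lt (Finset.mem_range.mp hρ)]
    rw [Finset.sum_congr rfl hrw2, ih, pow_succ]
    ring

open Finset in
lemma chernoff (n : ℕ) (τ lam : ℝ) (hlam : 1 ≤ lam) :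
    (((Finset.range (2^n)).filter (fun ρ => (psum n ρ : ℝ) ≤ τ)).card : ℝ)
      ≤ lam ^ τ * (1 + 1/lam) ^ n := by
  have hlam0 : 0 < lam := by linarith
  have key : ∀ ρ ∈ (Finset.range (2^n)).filter (fun ρ => (psum n ρ : ℝ) ≤ τ),
      (1:ℝ) ≤ lam ^ τ * (1/lam) ^ (psum n ρ) := by
    intro ρ hρ
    have hτ : (psum n ρ : ℝ) ≤ τ := (Finset.mem_filter.mp hρ).2
    have h1 : lam ^ τ * (1/lam) ^ (psum n ρ) = lam ^ (τ - (psum n ρ : ℝ)) := by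
      rw [Real.rpow_sub hlam0, one_div, inv_pow, ← Real.rpow_natCast lam (psum n ρ)]
      ring
    rw [h1]
    exact Real.one_le_rpow hlam (by linarith)
  calc (((Finset.range (2^n)).filter (fun ρ => (psum n ρ : ℝ) ≤ τ)).card : ℝ)
      = ∑ ρ ∈ (Finset.range (2^n)).filter (fun ρ => (psum n ρ : ℝ) ≤ τ), (1:ℝ) := by simp
    _ ≤ ∑ ρ ∈ (Finset.range (2^n)).filter (fun ρ => (psum n ρ : ℝ) ≤ τ),
          lam ^ τ * (1/lam) ^ (psum n ρ) := Finset.sum_le_sum key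
    _ ≤ ∑ ρ ∈ Finset.range (2^n), lam ^ τ * (1/lam) ^ (psum n ρ) := by
        apply Finset.sum_le_sum_of_subset_of_nonneg (Finset.filter_subset _ _)
        intro ρ _ _
        positivity
    _ = lam ^ τ * ∑ ρ ∈ Finset.range (2^n), (1/lam) ^ (psum n ρ) := by rw [Finset.mul_sum]
    _ = lam ^ τ * (1 + 1/lam) ^ n := by rw [sum_pow_psum (1/lam) (by positivity) n]

open Finset in
lemma card_residue (N n : ℕ) (P : ℕ → Prop) [DecidablePred P] :
    ((Finset.Icc 1 N).filter (fun m => P (m % 2^n))).card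
      ≤ (N / 2^n + 1) * ((Finset.range (2^n)).filter P).card := by
  classical
  have h2 : 0 < 2^n := Nat.two_pow_pos n
  have := Finset.card_le_card_of_injOn (f := fun m => (m % 2^n, m / 2^n))
    (s := (Finset.Icc 1 N).filter (fun m => P (m % 2^n)))
    (t := ((Finset.range (2^n)).filter P) ×ˢ (Finset.range (N / 2^n + 1)))
    ?_ ?_
  · calc ((Finset.Icc 1 N).filter (fun m => P (m % 2^n))).card
        ≤ _ := this
      _ = _ := by rw [Finset.card_product, Finset.card_range]; ring
  · intro m hm
    simp only [Finset.mem_coe, Finset.mem_filter, Finset.mem_Icc] at hm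
    refine Finset.mem_product.mpr ⟨Finset.mem_filter.mpr ⟨Finset.mem_range.mpr (Nat.mod_lt _ h2), hm.2⟩, ?_⟩
    refine Finset.mem_range.mpr ?_
    simp only
    have : m / 2^n ≤ N / 2^n := Nat.div_le_div_right hm.1.2
    omega
  · intro a _ b _ hab
    obtain ⟨h1, h2⟩ : a % 2^n = b % 2^n ∧ a / 2^n = b / 2^n := by
      simpa [Prod.ext_iff] using hab
    have ha := Nat.div_add_mod a (2^n)
    have hb := Nat.div_add_mod b (2^n)
    rw [h1, h2] at ha
    omega

lemma geom_le' (q : ℝ) (h0 : 0 ≤ q) (h1 : q < 1) (k : ℕ) :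
    ∑ j ∈ Finset.range k, q^j ≤ 1/(1-q) := by
  have h : ∑ j ∈ Finset.range k, q^j = (1 - q^k)/(1-q) := by
    rw [geom_sum_eq (by linarith : q ≠ 1)]
    rw [div_eq_div_iff (by linarith) (by linarith)]
    ring
  rw [h, div_le_div_iff₀ (by linarith) (by linarith)]
  nlinarith [pow_nonneg h0 k]

lemma geom_tail (q : ℝ) (h0 : 0 ≤ q) (h1 : q < 1) (k : ℕ) :
    ∑ i ∈ Finset.range k, q^(k-i) ≤ q/(1-q) := by
  have h : ∑ i ∈ Finset.range k, q^(k-i) = ∑ j ∈ Finset.range k, q^(j+1) := by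
    rw [← Finset.sum_range_reflect (fun j => q^(j+1)) k]
    refine Finset.sum_congr rfl fun i hi => ?_
    have := Finset.mem_range.mp hi
    congr 1
    omega
  rw [h]
  have : ∑ j ∈ Finset.range k, q^(j+1) = q * ∑ j ∈ Finset.range k, q^j := by
    rw [Finset.mul_sum]
    exact Finset.sum_congr rfl fun j _ => by ring
  rw [this, div_eq_mul_one_div]
  exact mul_le_mul_of_nonneg_left (geom_le' q h0 h1 k) h0

lemma rr_le_one (k m : ℕ) : r k m ≤ 1 := by
  have h : r k m ≤ ∑ i ∈ Finset.range k, ((1:ℝ)/2)^(k-i) := by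
    apply Finset.sum_le_sum
    intro i hi
    have hp : (parity m i : ℝ) ≤ 1 := by exact_mod_cast parity_le_one m i
    have h3 : (1:ℝ) ≤ 3 ^ (∑ j ∈ Finset.range (i + 1), parity m j) := one_le_pow₀ (by norm_num)
    have h2 : (0:ℝ) < 2 ^ (k-i) := by positivity
    rw [div_le_iff₀ (by positivity), div_pow, one_pow]
    rw [div_mul_eq_mul_div, le_div_iff₀ h2]
    calc (parity m i : ℝ) * (2:ℝ)^(k-i) ≤ 1 * 2^(k-i) := by
          exact mul_le_mul_of_nonneg_right hp (le_of_lt h2)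
      _ = 2^(k-i) := by ring
      _ ≤ (3 ^ (∑ j ∈ Finset.range (i + 1), parity m j) * 2 ^ (k - i)) * 1 := by
          rw [mul_one]
          exact le_mul_of_one_le_left (le_of_lt h2) h3
      _ = 1 * ((3 ^ (∑ j ∈ Finset.range (i + 1), parity m j)) * 2 ^ (k - i)) := by ring
  calc r k m ≤ ∑ i ∈ Finset.range k, ((1:ℝ)/2)^(k-i) := h
    _ ≤ (1/2)/(1-1/2) := geom_tail (1/2) (by norm_num) (by norm_num) k
    _ = 1 := by norm_num

lemma two_rpow_le_rpow (ε : ℝ) (hε : 0 < ε) (k m : ℕ) (h2k : 2^k ≤ m) :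
    (2:ℝ) ^ (ε * k) ≤ (m:ℝ) ^ ε := by
  have h : ((2:ℝ)^(k:ℕ)) ≤ (m:ℝ) := by exact_mod_cast h2k
  calc (2:ℝ) ^ (ε * k) = ((2:ℝ) ^ (k:ℝ)) ^ ε := by
        rw [← Real.rpow_mul (by norm_num), mul_comm]
    _ ≤ (m:ℝ) ^ ε := by
        apply Real.rpow_le_rpow (by positivity) _ (le_of_lt hε)
        rwa [Real.rpow_natCast]

lemma exists_bad_n (ε : ℝ) (hε : 0 < ε) (k m : ℕ) (hk : 1 ≤ k)
    (h2k : 2^k ≤ m) (hbad : (m:ℝ)^ε ≤ r k m * 3^((k:ℝ)/2)) :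
    ∃ n, 1 ≤ n ∧ n ≤ k ∧ (psum n m : ℝ) ≤ (n:ℝ)/2 + 2 - (Real.logb 3 2)*ε*k := by
  by_contra hcon
  push_neg at hcon
  set c := Real.logb 3 2 with hc
  set s3 := Real.sqrt 3 with hs3
  have hs3sq : s3^2 = 3 := Real.sq_sqrt (by norm_num)
  have hs3pos : 0 < s3 := Real.sqrt_pos.mpr (by norm_num)
  have hs3lt : s3 < 1.8 := by nlinarith
  have hs3gt : 1.7 < s3 := by nlinarith
  set q := s3/2 with hq
  have hq0 : 0 ≤ q := by positivity
  have hq1 : q < 1 := by rw [hq]; linarith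
  set B := (2:ℝ) ^ (ε * k) with hB
  have hBpos : 0 < B := Real.rpow_pos_of_pos (by norm_num) _
  -- each term of r k m * 3^(k/2) is at most (B/(9*s3)) * q^(k-i)
  have hterm : ∀ i ∈ Finset.range k,
      (parity m i : ℝ) / (3 ^ (∑ j ∈ Finset.range (i + 1), parity m j) * 2 ^ (k - i))
        * 3^((k:ℝ)/2) ≤ (B/(9*s3)) * q^(k-i) := by
    intro i hi
    have hik : i < k := Finset.mem_range.mp hi
    have hτ := hcon (i+1) (by omega) (by omega)
    -- 3 ^ psum (i+1) m ≥ 3 ^ τ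
    have hpsum : ((∑ j ∈ Finset.range (i+1), parity m j : ℕ) : ℝ)
        = (psum (i+1) m : ℝ) := by rw [psum]
    have h3s : (3:ℝ) ^ (((i:ℝ)+1)/2 + 2 - c*ε*k)
        ≤ (3:ℝ) ^ (∑ j ∈ Finset.range (i + 1), parity m j) := by
      rw [← Real.rpow_natCast (3:ℝ) (∑ j ∈ Finset.range (i + 1), parity m j)]
      apply Real.rpow_le_rpow_of_exponent_le (by norm_num)
      rw [hpsum]
      push_cast at hτ ⊢
      linarith [hτ]
    have hp1 : (parity m i : ℝ) ≤ 1 := by exact_mod_cast parity_le_one m i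
    have hden : (0:ℝ) < 3 ^ (∑ j ∈ Finset.range (i + 1), parity m j) * 2 ^ (k - i) := by positivity
    have step1 : (parity m i : ℝ) / (3 ^ (∑ j ∈ Finset.range (i + 1), parity m j) * 2 ^ (k - i))
        * 3^((k:ℝ)/2)
        ≤ 3^((k:ℝ)/2) / ((3:ℝ) ^ (((i:ℝ)+1)/2 + 2 - c*ε*k) * 2 ^ (k - i)) := by
      have h3pow : (0:ℝ) < (3:ℝ) ^ (((i:ℝ)+1)/2 + 2 - c*ε*k) := Real.rpow_pos_of_pos (by norm_num) _
      have h3k : (0:ℝ) < (3:ℝ)^((k:ℝ)/2) := Real.rpow_pos_of_pos (by norm_num) _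
      rw [div_mul_eq_mul_div, div_le_div_iff₀ hden (by positivity)]
      calc (parity m i : ℝ) * 3^((k:ℝ)/2) * ((3:ℝ) ^ (((i:ℝ)+1)/2 + 2 - c*ε*k) * 2 ^ (k - i))
          ≤ 1 * 3^((k:ℝ)/2) * ((3:ℝ) ^ (∑ j ∈ Finset.range (i + 1), parity m j) * 2 ^ (k - i)) := by
            apply mul_le_mul (mul_le_mul_of_nonneg_right hp1 h3k.le)
              (mul_le_mul_of_nonneg_right h3s (by positivity)) (by positivity) (by positivity)
        _ = 3^((k:ℝ)/2) * ((3:ℝ) ^ (∑ j ∈ Finset.range (i + 1), parity m j) * 2 ^ (k - i)) := by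
            ring
    refine step1.trans ?_
    -- now an equality/inequality computation
    have hkey : 3^((k:ℝ)/2) / ((3:ℝ) ^ (((i:ℝ)+1)/2 + 2 - c*ε*k) * 2 ^ (k - i))
        = (B/(9*s3)) * q^(k-i) := by
      have h3c : (3:ℝ) ^ (c*ε*(k:ℝ)) = B := by
        rw [hB, hc]
        rw [show Real.logb 3 2 * ε * (k:ℝ) = Real.logb 3 2 * (ε * k) by ring]
        rw [Real.rpow_mul (by norm_num), Real.rpow_logb (by norm_num) (by norm_num) (by norm_num)]
      have hd : ((k:ℝ)/2 - (((i:ℝ)+1)/2 + 2 - c*ε*k)) = (((k-i:ℕ)):ℝ)/2 - 1/2 - 2 + c*ε*k := by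
        have : ((k-i:ℕ):ℝ) = (k:ℝ) - i := by
          push_cast [Nat.cast_sub (le_of_lt hik)]
          ring
        rw [this]; ring
      rw [div_eq_iff (by positivity)]
      rw [show 3^((k:ℝ)/2) = (3:ℝ)^((k:ℝ)/2 - (((i:ℝ)+1)/2 + 2 - c*ε*k)) * (3:ℝ)^(((i:ℝ)+1)/2 + 2 - c*ε*k) by
        rw [← Real.rpow_add (by norm_num)]; ring_nf]
      rw [hd]
      have hsplit : (3:ℝ)^((((k-i:ℕ)):ℝ)/2 - 1/2 - 2 + c*ε*(k:ℝ))
          = (3:ℝ)^((((k-i:ℕ)):ℝ)/2) * (3:ℝ)^(-(1:ℝ)/2) * (3:ℝ)^(-(2:ℝ)) * B := by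
        rw [← h3c, ← Real.rpow_add (by norm_num), ← Real.rpow_add (by norm_num),
            ← Real.rpow_add (by norm_num)]
        ring_nf
      rw [hsplit]
      have h1 : (3:ℝ)^((((k-i:ℕ)):ℝ)/2) = s3^(k-i) := by
        rw [hs3, show Real.sqrt 3 = (3:ℝ)^((1:ℝ)/2) from Real.sqrt_eq_rpow 3,
            ← Real.rpow_natCast ((3:ℝ)^((1:ℝ)/2)) (k-i), ← Real.rpow_mul (by norm_num)]
        ring_nf
      have h2 : (3:ℝ)^(-(1:ℝ)/2) = 1/s3 := by
        rw [hs3, Real.sqrt_eq_rpow, show (-(1:ℝ))/2 = -((1:ℝ)/2) by ring,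
            Real.rpow_neg (by norm_num)]
        exact (one_div _).symm
      have h3 : (3:ℝ)^(-(2:ℝ)) = 1/9 := by
        rw [show (-2:ℝ) = ((-2:ℤ):ℝ) by norm_num, Real.rpow_intCast]
        norm_num
      rw [h1, h2, h3, hq]
      have hs3ne : s3 ≠ 0 := ne_of_gt hs3pos
      field_simp
      rw [← mul_pow, div_mul_cancel₀ s3 two_ne_zero]
    rw [hkey]
  -- sum the bounds
  have hsum : r k m * 3^((k:ℝ)/2) ≤ (B/(9*s3)) * (q/(1-q)) := by
    rw [r, Finset.sum_mul]
    calc ∑ i ∈ Finset.range k, (parity m i : ℝ) / (3 ^ (∑ j ∈ Finset.range (i + 1), parity m j) * 2 ^ (k - i)) * 3^((k:ℝ)/2)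
        ≤ ∑ i ∈ Finset.range k, (B/(9*s3)) * q^(k-i) := Finset.sum_le_sum hterm
      _ = (B/(9*s3)) * ∑ i ∈ Finset.range k, q^(k-i) := by rw [Finset.mul_sum]
      _ ≤ (B/(9*s3)) * (q/(1-q)) := by
          apply mul_le_mul_of_nonneg_left (geom_tail q hq0 hq1 k) (by positivity)
  have hlt : (B/(9*s3)) * (q/(1-q)) < B := by
    rw [hq]
    rw [div_mul_div_comm]
    rw [div_lt_iff₀ (by nlinarith)]
    nlinarith
  have hB2 : B ≤ (m:ℝ)^ε := two_rpow_le_rpow ε hε k m h2k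
  linarith [hbad, hsum, hlt, hB2]

noncomputable def hh (lam : ℝ) : ℝ := (Real.sqrt lam + 1/Real.sqrt lam)/2

lemma hh_gt_one {lam : ℝ} (hlam : 1 < lam) : 1 < hh lam := by
  have hs : 1 < Real.sqrt lam := by
    rw [show (1:ℝ) = Real.sqrt 1 by simp]
    exact Real.sqrt_lt_sqrt (by norm_num) hlam
  have hs0 : 0 < Real.sqrt lam := by linarith
  have hinv : Real.sqrt lam * (Real.sqrt lam)⁻¹ = 1 := mul_inv_cancel₀ (ne_of_gt hs0)
  rw [hh, lt_div_iff₀ (by norm_num), one_div]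
  nlinarith [mul_pos (sub_pos.mpr hs) (sub_pos.mpr hs), inv_pos.mpr hs0]

lemma badk_small (ε : ℝ) (hε : 0 < ε) (A : ℝ) (hA : (3:ℝ)^(1/(2*ε)) ≤ A) (N k : ℕ) :
    (((Finset.Icc 1 N).filter
        (fun m : ℕ => 2^k ≤ m ∧ (m:ℝ)^ε ≤ r k m * 3^((k:ℝ)/2))).card : ℝ) ≤ A^k := by
  classical
  have hA0 : (0:ℝ) < (3:ℝ)^(1/(2*ε)) := Real.rpow_pos_of_pos (by norm_num) _
  have hA1 : (0:ℝ) < A := lt_of_lt_of_le hA0 hA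
  have hsub : (Finset.Icc 1 N).filter (fun m : ℕ => 2^k ≤ m ∧ (m:ℝ)^ε ≤ r k m * 3^((k:ℝ)/2))
      ⊆ Finset.Icc 1 (⌊A^k⌋₊) := by
    intro m hm
    simp only [Finset.mem_filter, Finset.mem_Icc] at hm
    obtain ⟨⟨hm1, _⟩, _, hm2⟩ := hm
    have hmA : (m:ℝ) ≤ A^k := by
      have h1 : (m:ℝ)^ε ≤ (3:ℝ)^((k:ℝ)/2) := by
        refine hm2.trans ?_
        have := rr_le_one k m
        have h3k : (0:ℝ) < (3:ℝ)^((k:ℝ)/2) := Real.rpow_pos_of_pos (by norm_num) _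
        nlinarith
      calc (m:ℝ) = ((m:ℝ)^ε)^(ε⁻¹) := (Real.rpow_rpow_inv (by positivity) (ne_of_gt hε)).symm
        _ ≤ ((3:ℝ)^((k:ℝ)/2))^(ε⁻¹) :=
            Real.rpow_le_rpow (by positivity) h1 (inv_nonneg.mpr hε.le)
        _ = (3:ℝ)^((1/(2*ε)) * (k:ℝ)) := by
            rw [← Real.rpow_mul (by norm_num)]
            congr 1
            field_simp
        _ = ((3:ℝ)^((1:ℝ)/(2*ε)))^(k:ℕ) := by
            rw [← Real.rpow_natCast ((3:ℝ)^((1:ℝ)/(2*ε))) k, ← Real.rpow_mul (by norm_num)]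
        _ ≤ A^k := pow_le_pow_left₀ hA0.le hA k
    exact Finset.mem_Icc.mpr ⟨hm1, Nat.le_floor hmA⟩
  have hcard := Finset.card_le_card hsub
  calc (((Finset.Icc 1 N).filter
        (fun m : ℕ => 2^k ≤ m ∧ (m:ℝ)^ε ≤ r k m * 3^((k:ℝ)/2))).card : ℝ)
      ≤ ((Finset.Icc 1 (⌊A^k⌋₊)).card : ℝ) := by exact_mod_cast hcard
    _ = (⌊A^k⌋₊ : ℝ) := by rw [Nat.card_Icc]; simp
    _ ≤ A^k := Nat.floor_le (pow_nonneg hA1.le k)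

open Finset in
lemma badk_chernoff (ε lam : ℝ) (hε : 0 < ε) (hlam1 : 1 < lam) (hlam2 : lam ≤ 2)
    (N k : ℕ) (hk : 1 ≤ k) :
    (((Finset.Icc 1 N).filter
        (fun m : ℕ => 2^k ≤ m ∧ (m:ℝ)^ε ≤ r k m * 3^((k:ℝ)/2))).card : ℝ)
      ≤ 8 * (N:ℝ) * (hh lam / lam ^ (Real.logb 3 2 * ε))^k * (hh lam / (hh lam - 1)) := by
  classical
  set c := Real.logb 3 2 with hc
  have hhh := hh_gt_one hlam1
  have hhh0 : 0 < hh lam := by linarith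
  have hL0 : (0:ℝ) < lam ^ (c * ε) := Real.rpow_pos_of_pos (by linarith) _
  set Bk := (Finset.Icc 1 N).filter
      (fun m : ℕ => 2^k ≤ m ∧ (m:ℝ)^ε ≤ r k m * 3^((k:ℝ)/2)) with hBk
  rcases Finset.eq_empty_or_nonempty Bk with he | hne
  · rw [he]
    simp only [Finset.card_empty, Nat.cast_zero]
    have hnn : (0:ℝ) ≤ hh lam / (hh lam - 1) := div_nonneg (by linarith) (by linarith)
    have hnn2 : (0:ℝ) ≤ hh lam / lam ^ (c*ε) := div_nonneg (by linarith) hL0.le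
    exact mul_nonneg (mul_nonneg (mul_nonneg (by norm_num) (Nat.cast_nonneg N))
      (pow_nonneg hnn2 k)) hnn
  · -- 2^k ≤ N
    obtain ⟨m₀, hm₀⟩ := hne
    rw [hBk, Finset.mem_filter, Finset.mem_Icc] at hm₀
    have h2kN : 2^k ≤ N := le_trans hm₀.2.1 hm₀.1.2
    -- cover by events over n
    have hcover : Bk ⊆ (Finset.Icc 1 k).biUnion (fun n =>
        (Finset.Icc 1 N).filter (fun m : ℕ => (psum n m : ℝ) ≤ (n:ℝ)/2 + 2 - c*ε*k)) := by
      intro m hm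
      rw [hBk, Finset.mem_filter] at hm
      obtain ⟨hmIcc, h2k, hbad⟩ := hm
      obtain ⟨n, hn1, hnk, hτ⟩ := exists_bad_n ε hε k m hk h2k hbad
      exact Finset.mem_biUnion.mpr ⟨n, Finset.mem_Icc.mpr ⟨hn1, hnk⟩,
        Finset.mem_filter.mpr ⟨hmIcc, hτ⟩⟩
    have hcard1 : (Bk.card : ℝ) ≤ ∑ n ∈ Finset.Icc 1 k,
        (((Finset.Icc 1 N).filter (fun m : ℕ => (psum n m : ℝ) ≤ (n:ℝ)/2 + 2 - c*ε*k)).card : ℝ) := by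
      have := le_trans (Finset.card_le_card hcover) (Finset.card_biUnion_le)
      exact_mod_cast this
    -- bound each n-term
    have hterm : ∀ n ∈ Finset.Icc 1 k,
        (((Finset.Icc 1 N).filter (fun m : ℕ => (psum n m : ℝ) ≤ (n:ℝ)/2 + 2 - c*ε*k)).card : ℝ)
          ≤ 8 * (N:ℝ) * (lam ^ (c*ε))⁻¹ ^ k * hh lam ^ n := by
      intro n hn
      rw [Finset.mem_Icc] at hn
      set τ := (n:ℝ)/2 + 2 - c*ε*k with hτdef
      have hfe : (Finset.Icc 1 N).filter (fun m : ℕ => (psum n m : ℝ) ≤ τ)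
          = (Finset.Icc 1 N).filter (fun m : ℕ => ((psum n (m % 2^n) : ℝ) ≤ τ)) := by
        apply Finset.filter_congr
        intro m _
        rw [psum_mod]
      have hres := card_residue N n (fun ρ => (psum n ρ : ℝ) ≤ τ)
      have hchern := chernoff n τ lam (le_of_lt hlam1)
      have h2n : (2:ℕ)^n ≤ N := le_trans (Nat.pow_le_pow_right (by norm_num) hn.2) h2kN
      have h2n0 : (0:ℝ) < (2:ℝ)^n := by positivity
      have hNn : (1:ℝ) ≤ (N:ℝ) / (2:ℝ)^n := by
        rw [le_div_iff₀ h2n0]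
        have : ((2:ℕ)^n : ℝ) ≤ (N:ℝ) := by exact_mod_cast h2n
        push_cast at this ⊢
        linarith
    -- cast and combine
      have hcast : ((((Finset.Icc 1 N).filter (fun m : ℕ => (psum n m : ℝ) ≤ τ)).card : ℕ) : ℝ)
          ≤ ((N / 2^n + 1 : ℕ) : ℝ) * (lam ^ τ * (1 + 1/lam)^n) := by
        rw [hfe]
        calc ((((Finset.Icc 1 N).filter (fun m : ℕ => (psum n (m % 2^n) : ℝ) ≤ τ)).card : ℕ) : ℝ)
            ≤ ((N / 2^n + 1 : ℕ) : ℝ) *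
              ((((Finset.range (2^n)).filter (fun ρ => (psum n ρ : ℝ) ≤ τ)).card : ℕ) : ℝ) := by
              exact_mod_cast card_residue N n (fun ρ => (psum n ρ : ℝ) ≤ τ)
          _ ≤ ((N / 2^n + 1 : ℕ) : ℝ) * (lam ^ τ * (1 + 1/lam)^n) := by
              apply mul_le_mul_of_nonneg_left hchern (by positivity)
      have hdiv : ((N / 2^n + 1 : ℕ) : ℝ) ≤ 2 * (N:ℝ) / (2:ℝ)^n := by
        have h1 : ((N / 2^n : ℕ) : ℝ) ≤ (N:ℝ) / ((2^n : ℕ) : ℝ) := Nat.cast_div_le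
        push_cast at h1
        have h2 : 2 * (N:ℝ) / (2:ℝ)^n = (N:ℝ)/(2:ℝ)^n + (N:ℝ)/(2:ℝ)^n := by ring
        push_cast
        linarith
      -- decompose lam ^ τ
      have hlam0 : (0:ℝ) < lam := by linarith
      have hsq : Real.sqrt lam ^ 2 = lam := Real.sq_sqrt hlam0.le
      have hsq0 : 0 < Real.sqrt lam := Real.sqrt_pos.mpr hlam0
      have e1 : lam ^ ((n:ℝ)/2) = Real.sqrt lam ^ n := by
        rw [show (n:ℝ)/2 = (1/2) * (n:ℝ) by ring, Real.rpow_mul hlam0.le,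
            ← Real.sqrt_eq_rpow, Real.rpow_natCast]
      have e2 : lam ^ (-(c*ε*(k:ℝ))) = (lam ^ (c*ε))⁻¹ ^ k := by
        rw [inv_pow, ← Real.rpow_natCast (lam ^ (c*ε)) k, ← Real.rpow_mul hlam0.le,
            ← Real.rpow_neg hlam0.le]
      have hτsplit : lam ^ τ = Real.sqrt lam ^ n * lam ^ (2:ℝ) * (lam ^ (c*ε))⁻¹ ^ k := by
        rw [hτdef, show (n:ℝ)/2 + 2 - c*ε*(k:ℝ) = (n:ℝ)/2 + 2 + (-(c*ε*(k:ℝ))) by ring,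
            Real.rpow_add hlam0, Real.rpow_add hlam0, e1, e2]
      have hlamsq : lam ^ (2:ℝ) ≤ 4 := by
        rw [show (2:ℝ) = ((2:ℕ):ℝ) by norm_num, Real.rpow_natCast]
        nlinarith
      -- assemble per n
      have hcomb : ((N / 2^n + 1 : ℕ) : ℝ) * (lam ^ τ * (1 + 1/lam)^n)
          ≤ 8 * (N:ℝ) * (lam ^ (c*ε))⁻¹ ^ k * hh lam ^ n := by
        have hpos1 : (0:ℝ) ≤ lam ^ τ * (1 + 1/lam)^n := by positivity
        calc ((N / 2^n + 1 : ℕ) : ℝ) * (lam ^ τ * (1 + 1/lam)^n)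
            ≤ (2 * (N:ℝ) / (2:ℝ)^n) * (lam ^ τ * (1 + 1/lam)^n) :=
              mul_le_mul_of_nonneg_right hdiv hpos1
          _ = 2 * (N:ℝ) * (lam ^ (c*ε))⁻¹ ^ k * lam ^ (2:ℝ) *
                ((Real.sqrt lam * (1 + 1/lam) / 2)^n) := by
              have hx : (Real.sqrt lam * (1 + 1/lam) / 2)^n
                  = Real.sqrt lam ^ n * (1 + 1/lam)^n / 2^n := by
                rw [div_pow, mul_pow]
              rw [hτsplit, hx]
              ring
          _ ≤ 2 * (N:ℝ) * (lam ^ (c*ε))⁻¹ ^ k * 4 * hh lam ^ n := by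
              have h3 : Real.sqrt lam / lam = 1 / Real.sqrt lam := by
                rw [div_eq_div_iff (by linarith : lam ≠ 0) (ne_of_gt hsq0), one_mul]
                nlinarith [hsq]
              have hhh2 : Real.sqrt lam * (1 + 1/lam) / 2 = hh lam := by
                rw [hh, mul_add, mul_one, mul_one_div, h3]
              rw [hhh2]
              apply mul_le_mul_of_nonneg_right _ (by positivity)
              apply mul_le_mul_of_nonneg_left hlamsq (by positivity)
          _ = 8 * (N:ℝ) * (lam ^ (c*ε))⁻¹ ^ k * hh lam ^ n := by ring
      exact le_trans hcast hcomb
    -- sum over n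
    have hsum : ∑ n ∈ Finset.Icc 1 k, (8 * (N:ℝ) * (lam ^ (c*ε))⁻¹ ^ k * hh lam ^ n)
        ≤ 8 * (N:ℝ) * (lam ^ (c*ε))⁻¹ ^ k * (hh lam ^ k * (hh lam / (hh lam - 1))) := by
      rw [← Finset.mul_sum]
      apply mul_le_mul_of_nonneg_left _ (by positivity)
      have hgeo : ∑ n ∈ Finset.Icc 1 k, hh lam ^ n ≤ hh lam ^ k * (hh lam / (hh lam - 1)) := by
        have hd : (0:ℝ) < hh lam - 1 := by linarith
        have hsub2 : Finset.Icc 1 k ⊆ Finset.range (k+1) := by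
          intro x hx
          rw [Finset.mem_range]
          rw [Finset.mem_Icc] at hx
          omega
        have h1 : ∑ n ∈ Finset.Icc 1 k, hh lam ^ n ≤ ∑ n ∈ Finset.range (k+1), hh lam ^ n :=
          Finset.sum_le_sum_of_subset_of_nonneg hsub2 (fun i _ _ => pow_nonneg hhh0.le i)
        have h2 : ∑ n ∈ Finset.range (k+1), hh lam ^ n = (hh lam ^ (k+1) - 1)/(hh lam - 1) :=
          geom_sum_eq (ne_of_gt hhh) (k+1)
        have h3 : hh lam ^ k * (hh lam / (hh lam - 1)) = hh lam ^ (k+1) / (hh lam - 1) := by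
          rw [pow_succ]
          ring
        rw [h2] at h1
        rw [h3]
        refine h1.trans ?_
        rw [div_le_div_iff₀ hd hd]
        nlinarith [pow_pos hhh0 (k+1)]
      exact hgeo
    calc (Bk.card : ℝ) ≤ _ := hcard1
      _ ≤ ∑ n ∈ Finset.Icc 1 k, (8 * (N:ℝ) * (lam ^ (c*ε))⁻¹ ^ k * hh lam ^ n) :=
          Finset.sum_le_sum hterm
      _ ≤ 8 * (N:ℝ) * (lam ^ (c*ε))⁻¹ ^ k * (hh lam ^ k * (hh lam / (hh lam - 1))) := hsum
      _ = 8 * (N:ℝ) * (hh lam / lam ^ (c*ε))^k * (hh lam / (hh lam - 1)) := by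
          have hdp : (hh lam / lam ^ (c*ε))^k = hh lam ^ k * (lam ^ (c*ε))⁻¹ ^ k := by
            rw [div_pow, inv_pow, div_eq_mul_inv]
          rw [hdp]
          ring

lemma half_le_logb32 : (1/2 : ℝ) ≤ Real.logb 3 2 := by
  rw [Real.logb, le_div_iff₀ (Real.log_pos (by norm_num))]
  have h4 : Real.log 4 = 2 * Real.log 2 := by
    rw [show (4:ℝ) = 2^2 by norm_num, Real.log_pow]
    push_cast
    ring
  have h34 : Real.log 3 ≤ Real.log 4 := Real.log_le_log (by norm_num) (by norm_num)
  linarith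

lemma hh_lt_rpow (ε : ℝ) (hε : 0 < ε) :
    hh (1 + min ε 1 / 2) < (1 + min ε 1 / 2) ^ (Real.logb 3 2 * ε) := by
  set u := min ε 1 / 2 with hu
  have hu0 : 0 < u := by
    rw [hu]
    have : 0 < min ε 1 := lt_min hε (by norm_num)
    linarith
  have huε : u ≤ ε/2 := by
    rw [hu]
    have : min ε 1 ≤ ε := min_le_left _ _
    linarith
  have hu1 : u ≤ 1/2 := by
    rw [hu]
    have : min ε 1 ≤ 1 := min_le_right _ _
    linarith
  set lam := 1 + u with hlamdef
  have hlam1 : 1 < lam := by rw [hlamdef]; linarith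
  have hlam0 : (0:ℝ) < lam := by linarith
  set c := Real.logb 3 2 with hc
  have hc2 : (1/2:ℝ) ≤ c := half_le_logb32
  have hs0 : 0 < Real.sqrt lam := Real.sqrt_pos.mpr hlam0
  have hsq : Real.sqrt lam ^ 2 = lam := Real.sq_sqrt hlam0.le
  have hL0 : (0:ℝ) < lam ^ (c * ε) := Real.rpow_pos_of_pos hlam0 _
  -- log lam ≥ u/(1+u)
  have hloglam : u/(1+u) ≤ Real.log lam := by
    rw [Real.le_log_iff_exp_le hlam0]
    have hx := Real.add_one_le_exp (-(u/(1+u)))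
    have h1u : (0:ℝ) < 1 + u := by linarith
    have he : (0:ℝ) < Real.exp (-(u/(1+u))) := Real.exp_pos _
    have hinv : Real.exp (u/(1+u)) = (Real.exp (-(u/(1+u))))⁻¹ := by
      rw [← Real.exp_neg]
      ring_nf
    rw [hlamdef, hinv]
    rw [inv_le_iff_one_le_mul₀ he]
    have h2 : -(u/(1+u)) + 1 = 1/(1+u) := by
      field_simp
      ring
    rw [h2] at hx
    calc (1:ℝ) = (1/(1+u)) * (1+u) := by field_simp
      _ ≤ Real.exp (-(u/(1+u))) * (1+u) := by
          apply mul_le_mul_of_nonneg_right hx (by linarith)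
      _ = (1+u) * Real.exp (-(u/(1+u))) := by ring
  -- L^2 lower bound
  have hL2 : 1 + (2/3) * ε * u ≤ (lam ^ (c * ε))^2 := by
    have h1 : (lam ^ (c * ε))^2 = lam ^ (c * ε * 2) := by
      rw [← Real.rpow_natCast (lam ^ (c*ε)) 2, ← Real.rpow_mul hlam0.le]
      norm_num
    rw [h1, Real.rpow_def_of_pos hlam0]
    have h2 : 1 + Real.log lam * (c * ε * 2) ≤ Real.exp (Real.log lam * (c * ε * 2)) := by
      have := Real.add_one_le_exp (Real.log lam * (c * ε * 2))
      linarith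
    refine le_trans ?_ h2
    have hll : (0:ℝ) < u/(1+u) := by positivity
    have h3 : u/(1+u) * (c * ε * 2) ≤ Real.log lam * (c * ε * 2) := by
      apply mul_le_mul_of_nonneg_right hloglam
      positivity
    have h4 : (2/3) * ε * u ≤ u/(1+u) * (c * ε * 2) := by
      have h5 : (2/3:ℝ) ≤ 1/(1+u) := by
        rw [div_le_div_iff₀ (by norm_num) (by linarith)]
        linarith
      have h6 : u/(1+u) * (c * ε * 2) = (1/(1+u)) * (c * 2) * (ε * u) := by ring
      rw [h6]
      have h7 : (1:ℝ) ≤ c * 2 := by linarith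
      have h8 : (2/3:ℝ) * 1 ≤ (1/(1+u)) * (c*2) :=
        mul_le_mul h5 h7 (by norm_num) (by positivity)
      nlinarith [mul_pos hε hu0]
    linarith
  -- hh^2 upper bound
  have hhh2 : (hh lam)^2 ≤ 1 + u^2/4 := by
    have h1 : (hh lam)^2 = (lam + 2 + 1/lam)/4 := by
      rw [hh]
      field_simp
      rw [hsq]; ring
    rw [h1, hlamdef]
    rw [div_le_iff₀ (by norm_num)]
    have h2 : 1/(1+u) * (1+u) = 1 := by field_simp
    have h3 : (0:ℝ) < 1 + u := by linarith
    have h4 : 1/(1+u) ≤ 1 := by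
      rw [div_le_one h3]; linarith
    nlinarith [mul_pos hu0 hu0, mul_pos (mul_pos hu0 hu0) hu0, h2]
  have hfinal2 : (hh lam)^2 < (lam ^ (c * ε))^2 := by
    have hu2 : u^2/4 < (2/3) * ε * u := by
      have : u^2 ≤ (ε/2) * u := by nlinarith
      nlinarith [mul_pos hε hu0]
    calc (hh lam)^2 ≤ 1 + u^2/4 := hhh2
      _ < 1 + (2/3) * ε * u := by linarith
      _ ≤ (lam ^ (c * ε))^2 := hL2
  have hhh0 : 0 < hh lam := by linarith [hh_gt_one hlam1]
  exact lt_of_pow_lt_pow_left₀ 2 hL0.le hfinal2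




theorem r_bound_starDense (ε : ℝ) (hε : 0 < ε) :
    starDense {m : ℕ |
      ∀ k : ℕ, (k : ℝ) ≤ Real.logb 2 m →
        r k m * (3 : ℝ) ^ ((k : ℝ) / 2) * (m : ℝ) ^ (-ε) < 1} := by

  classical
  set Sset := {m : ℕ |
      ∀ k : ℕ, (k : ℝ) ≤ Real.logb 2 m →
        r k m * (3 : ℝ) ^ ((k : ℝ) / 2) * (m : ℝ) ^ (-ε) < 1} with hSset
  set c := Real.logb 3 2 with hc
  set u := min ε 1 / 2 with hu
  set lam := 1 + u with hlam
  have hu0 : 0 < u := by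
    rw [hu]
    have : 0 < min ε 1 := lt_min hε (by norm_num)
    linarith
  have hu1 : u ≤ 1/2 := by
    rw [hu]
    have : min ε 1 ≤ 1 := min_le_right _ _
    linarith
  have hlam1 : 1 < lam := by rw [hlam]; linarith
  have hlam2 : lam ≤ 2 := by rw [hlam]; linarith
  have hlam0 : (0:ℝ) < lam := by linarith
  have hhh : 1 < hh lam := hh_gt_one hlam1
  have hL0 : (0:ℝ) < lam ^ (c * ε) := Real.rpow_pos_of_pos hlam0 _
  set θ := hh lam / lam ^ (c * ε) with hθdef
  have hθ0 : 0 < θ := by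
    rw [hθdef]
    exact div_pos (by linarith) hL0
  have hθ1 : θ < 1 := by
    rw [hθdef, div_lt_one hL0]
    exact hh_lt_rpow ε hε
  set A : ℝ := max ((3:ℝ) ^ ((1:ℝ)/(2*ε))) 2 with hA
  have hA2 : (2:ℝ) ≤ A := le_max_right _ _
  have hA3 : (3:ℝ) ^ ((1:ℝ)/(2*ε)) ≤ A := le_max_left _ _
  have hA0 : (0:ℝ) < A := by linarith
  set E : ℝ := 8 * (hh lam / (hh lam - 1)) with hE
  have hE0 : (0:ℝ) < E := by
    rw [hE]
    have : 0 < hh lam / (hh lam - 1) := div_pos (by linarith) (by linarith)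
    linarith
  have hlogA : 1 ≤ Real.logb 2 A := by
    rw [Real.le_logb_iff_rpow_le (by norm_num) (by linarith)]
    rw [Real.rpow_one]
    exact hA2
  set β : ℝ := 1 / (2 * Real.logb 2 A) with hβ
  have hβ0 : 0 < β := by
    rw [hβ]
    positivity
  set γ : ℝ := -(β * Real.logb 2 θ) with hγ
  have hγ0 : 0 < γ := by
    rw [hγ, neg_pos]
    exact mul_neg_of_pos_of_neg hβ0 (Real.logb_neg (by norm_num) hθ0 hθ1)
  set D := min (1/2 : ℝ) γ with hD
  have hD0 : 0 < D := lt_min (by norm_num) hγ0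
  have hD1 : D ≤ 1 := le_trans (min_le_left _ _) (by norm_num)
  have hD12 : D ≤ 1/2 := min_le_left _ _
  have hDγ : D ≤ γ := min_le_right _ _
  set C := A + E * (1/(1-θ)) with hC
  have hC0 : 0 < C := by
    rw [hC]
    have : 0 < E * (1/(1-θ)) := by
      apply mul_pos hE0
      rw [one_div]
      exact inv_pos.mpr (by linarith)
    linarith
  refine ⟨D, hD0, hD1, C, hC0, ?_⟩
  intro N hN
  have hN0 : (0:ℝ) < N := by exact_mod_cast hN
  have hN1 : (1:ℝ) ≤ N := by exact_mod_cast hN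
  set Bad := (Finset.Icc 1 N).filter (fun m => m ∉ Sset) with hBad
  -- counting identity
  have hsplitcard : countIn Sset N + Bad.card = N := by
    rw [countIn, hBad]
    rw [Finset.card_filter_add_card_filter_not (fun m => m ∈ Sset)]
    simp
  -- the key bound
  have hkey : (Bad.card : ℝ) ≤ C * (N:ℝ) ^ ((1:ℝ) - D) := by
    set K := ⌊β * Real.logb 2 (N:ℝ)⌋₊ with hK
    set Bk : ℕ → Finset ℕ := fun k => (Finset.Icc 1 N).filter
        (fun m : ℕ => 2^k ≤ m ∧ (m:ℝ)^ε ≤ r k m * 3^((k:ℝ)/2)) with hBk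
    have hcover : Bad ⊆ (Finset.Icc 1 N).biUnion Bk := by
      intro m hm
      rw [hBad, Finset.mem_filter] at hm
      obtain ⟨hmIcc, hmS⟩ := hm
      rw [hSset, Set.mem_setOf_eq] at hmS
      push_neg at hmS
      obtain ⟨k, hklog, hk1⟩ := hmS
      have hmIcc' := Finset.mem_Icc.mp hmIcc
      have hm0 : (0:ℝ) < m := by
        have : 1 ≤ m := hmIcc'.1
        exact_mod_cast this
      have hkne : k ≠ 0 := by
        intro h0
        rw [h0] at hk1
        have : r 0 m = 0 := by simp [r]
        rw [this] at hk1
        simp at hk1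
        have : (0:ℝ) < (m:ℝ) ^ (-ε) := Real.rpow_pos_of_pos hm0 _
        linarith [hk1]
      have h2km : 2^k ≤ m := by
        have := (Real.le_logb_iff_rpow_le (by norm_num) hm0).mp hklog
        rw [Real.rpow_natCast] at this
        exact_mod_cast this
      have hmε : (m:ℝ)^ε ≤ r k m * 3^((k:ℝ)/2) := by
        have hge : 1 ≤ r k m * 3^((k:ℝ)/2) * (m:ℝ)^(-ε) := hk1
        have hmpos : (0:ℝ) < (m:ℝ)^ε := Real.rpow_pos_of_pos hm0 _
        have := mul_le_mul_of_nonneg_right hge hmpos.le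
        rw [one_mul, mul_assoc, ← Real.rpow_add hm0] at this
        simp at this
        exact this
      have hkN : k ≤ N := by
        have h1 : k < 2^k := Nat.lt_two_pow_self
        omega
      exact Finset.mem_biUnion.mpr ⟨k, Finset.mem_Icc.mpr ⟨Nat.one_le_iff_ne_zero.mpr hkne, hkN⟩,
        by rw [hBk]; exact Finset.mem_filter.mpr ⟨hmIcc, h2km, hmε⟩⟩
    have hcard1 : (Bad.card : ℝ) ≤ ∑ k ∈ Finset.Icc 1 N, ((Bk k).card : ℝ) := by
      have := le_trans (Finset.card_le_card hcover) Finset.card_biUnion_le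
      exact_mod_cast this
    -- split the sum at K
    have hsplit2 : ∑ k ∈ Finset.Icc 1 N, ((Bk k).card : ℝ)
        = ∑ k ∈ (Finset.Icc 1 N).filter (fun k => k ≤ K), ((Bk k).card : ℝ)
          + ∑ k ∈ (Finset.Icc 1 N).filter (fun k => ¬ k ≤ K), ((Bk k).card : ℝ) :=
      (Finset.sum_filter_add_sum_filter_not _ _ _).symm
    -- small branch
    have hsmall : ∑ k ∈ (Finset.Icc 1 N).filter (fun k => k ≤ K), ((Bk k).card : ℝ)
        ≤ A * A^K := by
      calc ∑ k ∈ (Finset.Icc 1 N).filter (fun k => k ≤ K), ((Bk k).card : ℝ)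
          ≤ ∑ k ∈ (Finset.Icc 1 N).filter (fun k => k ≤ K), A^k := by
            apply Finset.sum_le_sum
            intro k _
            exact badk_small ε hε A hA3 N k
        _ ≤ ∑ k ∈ Finset.range (K+1), A^k := by
            apply Finset.sum_le_sum_of_subset_of_nonneg
            · intro x hx
              simp only [Finset.mem_filter, Finset.mem_Icc, Finset.mem_range] at hx ⊢
              omega
            · intro i _ _
              positivity
        _ = (A^(K+1) - 1)/(A - 1) := geom_sum_eq (by linarith) (K+1)
        _ ≤ A^(K+1) := by
            rw [div_le_iff₀ (by linarith)]
            nlinarith [pow_pos hA0 (K+1)]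
        _ = A * A^K := by rw [pow_succ]; ring
    -- chernoff branch
    have hchern : ∑ k ∈ (Finset.Icc 1 N).filter (fun k => ¬ k ≤ K), ((Bk k).card : ℝ)
        ≤ E * (N:ℝ) * (θ^(K+1) * (1/(1-θ))) := by
      calc ∑ k ∈ (Finset.Icc 1 N).filter (fun k => ¬ k ≤ K), ((Bk k).card : ℝ)
          ≤ ∑ k ∈ (Finset.Icc 1 N).filter (fun k => ¬ k ≤ K), E * (N:ℝ) * θ^k := by
            apply Finset.sum_le_sum
            intro k hk
            simp only [Finset.mem_filter, Finset.mem_Icc] at hk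
            have := badk_chernoff ε lam hε hlam1 hlam2 N k hk.1.1
            rw [hBk]
            calc ((((Finset.Icc 1 N).filter
                (fun m : ℕ => 2^k ≤ m ∧ (m:ℝ)^ε ≤ r k m * 3^((k:ℝ)/2))).card : ℕ) : ℝ)
                ≤ 8 * (N:ℝ) * (hh lam / lam ^ (Real.logb 3 2 * ε))^k * (hh lam / (hh lam - 1)) :=
                  this
              _ = E * (N:ℝ) * θ^k := by
                  rw [hE, hθdef, hc]
                  ring
          _ = E * (N:ℝ) * ∑ k ∈ (Finset.Icc 1 N).filter (fun k => ¬ k ≤ K), θ^k := by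
            rw [Finset.mul_sum]
          _ ≤ E * (N:ℝ) * (θ^(K+1) * (1/(1-θ))) := by
            apply mul_le_mul_of_nonneg_left _ (by positivity)
            -- geometric tail over Icc (K+1) N
            have hsub3 : (Finset.Icc 1 N).filter (fun k => ¬ k ≤ K)
                ⊆ Finset.image (fun j => K+1+j) (Finset.range N) := by
              intro x hx
              simp only [Finset.mem_filter, Finset.mem_Icc] at hx
              simp only [Finset.mem_image, Finset.mem_range]
              exact ⟨x - (K+1), by omega, by omega⟩
            calc ∑ k ∈ (Finset.Icc 1 N).filter (fun k => ¬ k ≤ K), θ^k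
                ≤ ∑ k ∈ Finset.image (fun j => K+1+j) (Finset.range N), θ^k := by
                  apply Finset.sum_le_sum_of_subset_of_nonneg hsub3
                  intro i _ _
                  positivity
              _ = ∑ j ∈ Finset.range N, θ^(K+1+j) := by
                  rw [Finset.sum_image]
                  intro a _ b _ h
                  simp only at h
                  omega
              _ = θ^(K+1) * ∑ j ∈ Finset.range N, θ^j := by
                  rw [Finset.mul_sum]
                  exact Finset.sum_congr rfl fun j _ => by rw [pow_add]
              _ ≤ θ^(K+1) * (1/(1-θ)) := by
                  apply mul_le_mul_of_nonneg_left (geom_le' θ hθ0.le hθ1 N) (by positivity)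
    -- rpow estimates
    have hlogbN : 0 ≤ Real.logb 2 (N:ℝ) := Real.logb_nonneg (by norm_num) hN1
    have hAK : A^K ≤ (N:ℝ) ^ ((1:ℝ)/2) := by
      have h1 : (A:ℝ)^K = A ^ ((K:ℕ):ℝ) := by rw [Real.rpow_natCast]
      have h2 : A ^ ((K:ℕ):ℝ) ≤ A ^ (β * Real.logb 2 (N:ℝ)) := by
        apply Real.rpow_le_rpow_of_exponent_le (by linarith)
        exact Nat.floor_le (by positivity)
      have h3 : A ^ (β * Real.logb 2 (N:ℝ)) = (N:ℝ) ^ ((1:ℝ)/2) := by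
        have hne : Real.logb 2 A ≠ 0 := by linarith
        calc A ^ (β * Real.logb 2 (N:ℝ))
            = ((2:ℝ) ^ Real.logb 2 A) ^ (β * Real.logb 2 (N:ℝ)) := by
              rw [Real.rpow_logb (by norm_num) (by norm_num) hA0]
          _ = (2:ℝ) ^ (Real.logb 2 A * (β * Real.logb 2 (N:ℝ))) :=
              (Real.rpow_mul (by norm_num) _ _).symm
          _ = (2:ℝ) ^ (Real.logb 2 (N:ℝ) * (1/2)) := by
              congr 1
              rw [hβ]
              field_simp
          _ = ((2:ℝ) ^ Real.logb 2 (N:ℝ)) ^ ((1:ℝ)/2) := Real.rpow_mul (by norm_num) _ _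
          _ = (N:ℝ) ^ ((1:ℝ)/2) := by
              rw [Real.rpow_logb (by norm_num) (by norm_num) hN0]
      calc (A:ℝ)^K = A ^ ((K:ℕ):ℝ) := h1
        _ ≤ A ^ (β * Real.logb 2 (N:ℝ)) := h2
        _ = (N:ℝ) ^ ((1:ℝ)/2) := h3
    have hθK : θ^(K+1) ≤ (N:ℝ) ^ (-γ) := by
      set L := Real.logb 2 (N:ℝ) with hLdef
      have hKb : β * L - 1 ≤ ((K:ℕ):ℝ) := by
        have := Nat.lt_floor_add_one (β * L)
        have hKK : (K:ℝ) = (⌊β * L⌋₊ : ℝ) := by rw [hK]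
        push_cast at this ⊢
        linarith
      have s3 : θ ^ ((K:ℕ):ℝ) ≤ θ ^ (β * L - 1) :=
        Real.rpow_le_rpow_of_exponent_ge hθ0 hθ1.le hKb
      have s4 : θ ^ (β * L - 1) = θ ^ (β * L) / θ := by
        rw [Real.rpow_sub hθ0, Real.rpow_one]
      have e4 : θ ^ (β * L) = (N:ℝ) ^ (-γ) := by
        calc θ ^ (β * L)
            = ((2:ℝ) ^ Real.logb 2 θ) ^ (β * L) := by
              rw [Real.rpow_logb (by norm_num) (by norm_num) hθ0]
          _ = (2:ℝ) ^ (Real.logb 2 θ * (β * L)) := (Real.rpow_mul (by norm_num) _ _).symm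
          _ = (2:ℝ) ^ (L * (β * Real.logb 2 θ)) := by congr 1; ring
          _ = ((2:ℝ) ^ L) ^ (β * Real.logb 2 θ) := Real.rpow_mul (by norm_num) _ _
          _ = (N:ℝ) ^ (β * Real.logb 2 θ) := by
              rw [hLdef, Real.rpow_logb (by norm_num) (by norm_num) hN0]
          _ = (N:ℝ) ^ (-γ) := by rw [hγ]; ring_nf
      calc θ^(K+1) = θ^K * θ := pow_succ θ K
        _ ≤ (θ ^ (β * L) / θ) * θ := by
            apply mul_le_mul_of_nonneg_right _ hθ0.le
            rw [← Real.rpow_natCast θ K]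
            exact s3.trans_eq s4
        _ = θ ^ (β * L) := by field_simp
        _ = (N:ℝ) ^ (-γ) := e4
    -- combine
    have hfinal : (Bad.card : ℝ) ≤ A * (N:ℝ)^((1:ℝ)/2) + (E * (1/(1-θ))) * (N:ℝ) ^ ((1:ℝ) - γ) := by
      have h1 : (Bad.card : ℝ) ≤ A * A^K + E * (N:ℝ) * (θ^(K+1) * (1/(1-θ))) := by
        rw [hsplit2] at hcard1
        linarith [hsmall, hchern]
      have h2 : A * A^K ≤ A * (N:ℝ)^((1:ℝ)/2) := mul_le_mul_of_nonneg_left hAK hA0.le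
      have h3 : E * (N:ℝ) * (θ^(K+1) * (1/(1-θ))) ≤ (E * (1/(1-θ))) * (N:ℝ) ^ ((1:ℝ) - γ) := by
        have h4 : (N:ℝ) * θ^(K+1) ≤ (N:ℝ) ^ ((1:ℝ) - γ) := by
          calc (N:ℝ) * θ^(K+1) ≤ (N:ℝ) * (N:ℝ)^(-γ) :=
                mul_le_mul_of_nonneg_left hθK hN0.le
            _ = (N:ℝ) ^ ((1:ℝ) - γ) := by
                rw [show ((1:ℝ) - γ) = 1 + (-γ) by ring, Real.rpow_add hN0, Real.rpow_one]
        have h5 : (0:ℝ) ≤ E * (1/(1-θ)) := by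
          have h6 : (0:ℝ) < 1 - θ := by linarith
          positivity
        calc E * (N:ℝ) * (θ^(K+1) * (1/(1-θ)))
            = (E * (1/(1-θ))) * ((N:ℝ) * θ^(K+1)) := by ring
          _ ≤ (E * (1/(1-θ))) * (N:ℝ) ^ ((1:ℝ) - γ) := mul_le_mul_of_nonneg_left h4 h5
      linarith
    -- final comparison with N^(1-D)
    have hND : (N:ℝ)^((1:ℝ)/2) ≤ (N:ℝ)^((1:ℝ) - D) :=
      Real.rpow_le_rpow_of_exponent_le hN1 (by linarith)
    have hND2 : (N:ℝ)^((1:ℝ) - γ) ≤ (N:ℝ)^((1:ℝ) - D) :=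
      Real.rpow_le_rpow_of_exponent_le hN1 (by linarith)
    calc (Bad.card : ℝ) ≤ A * (N:ℝ)^((1:ℝ)/2) + (E * (1/(1-θ))) * (N:ℝ) ^ ((1:ℝ) - γ) := hfinal
      _ ≤ A * (N:ℝ)^((1:ℝ)-D) + (E * (1/(1-θ))) * (N:ℝ) ^ ((1:ℝ) - D) := by
          have k1 := mul_le_mul_of_nonneg_left hND hA0.le
          have h5 : (0:ℝ) ≤ E * (1/(1-θ)) := by
            have h6 : (0:ℝ) < 1 - θ := by linarith
            positivity
          have k2 := mul_le_mul_of_nonneg_left hND2 h5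
          linarith
      _ = C * (N:ℝ)^((1:ℝ)-D) := by rw [hC]; ring
  -- conclude density
  have hcount : (countIn Sset N : ℝ) = (N:ℝ) - (Bad.card : ℝ) := by
    have := hsplitcard
    have h2 : (countIn Sset N : ℝ) + (Bad.card : ℝ) = (N:ℝ) := by exact_mod_cast this
    linarith
  rw [hcount]
  have hdiv2 : (Bad.card : ℝ) / N ≤ C / (N:ℝ)^D := by
    have hNne : (N:ℝ) ≠ 0 := ne_of_gt hN0
    have hrw : C * (N:ℝ)^((1:ℝ)-D) / N = C / (N:ℝ)^D := by
      rw [div_eq_div_iff hNne (by positivity)]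
      rw [mul_assoc, ← Real.rpow_add hN0]
      rw [show (1:ℝ) - D + D = 1 by ring, Real.rpow_one]
    calc (Bad.card : ℝ) / N ≤ C * (N:ℝ)^((1:ℝ)-D) / N := by
          have := mul_le_mul_of_nonneg_right hkey (inv_nonneg.mpr hN0.le)
          simpa [div_eq_mul_inv] using this
      _ = C / (N:ℝ)^D := hrw
  have : ((N:ℝ) - (Bad.card:ℝ)) / N = 1 - (Bad.card:ℝ)/N := by
    field_simp
  rw [this]
  linarith
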